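/- There are infinitely many positive integer solutions (x, y, z) to the equation x*y*z = x^4 + y + 1. -/
import Mathlib

lemma step16 (x y z : ℕ) (hx : 0 < x) (hy : 0 < y) (hz : 0 < z)
    (heq : x * y * z = x ^ 4 + y + 1) (hinv : x ^ 2 < y) :
    ∃ x' y' z' : ℕ, 0 < x' ∧ 0 < y' ∧ 0 < z' ∧
      x' * y' * z' = x' ^ 4 + y' + 1 ∧ x' ^ 2 < y' ∧ x < x' := by
  have heq' : (x : ℤ) * y * z = (x : ℤ) ^ 4 + y + 1 := by exact_mod_cast heq
  -- x divides y + 1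
  have hle : x ^ 3 ≤ y * z := by nlinarith
  set x' := y * z - x ^ 3 with hx'def
  have hxx' : x * x' = y + 1 := by
    rw [hx'def]
    zify [hle]
    linear_combination heq'
  have hxx'Z : (x : ℤ) * x' = (y : ℤ) + 1 := by exact_mod_cast hxx'
  -- y divides x^4 + 1
  have hxz1 : 1 ≤ x * z := Nat.one_le_iff_ne_zero.mpr (by positivity)
  have hyd : y * (x * z - 1) = x ^ 4 + 1 := by
    zify [hxz1]
    linear_combination heq'
  have hydvd : y ∣ x ^ 4 + 1 := ⟨x * z - 1, hyd.symm⟩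
  -- y coprime to x^4
  have hcop : Nat.Coprime y (x ^ 4) := by
    have h1 : Nat.gcd y (x ^ 4) ∣ x ^ 4 + 1 := (Nat.gcd_dvd_left _ _).trans hydvd
    have h2 : Nat.gcd y (x ^ 4) ∣ x ^ 4 := Nat.gcd_dvd_right _ _
    have h3 : Nat.gcd y (x ^ 4) ∣ 1 := by
      have := Nat.dvd_sub h1 h2
      simpa using this
    exact Nat.dvd_one.mp h3
  -- y divides x^4 * (x'^4 + 1)
  have hkey : y ∣ x ^ 4 * (x' ^ 4 + 1) := by
    obtain ⟨k, hk⟩ := hydvd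
    have hkZ : (x : ℤ) ^ 4 + 1 = (y : ℤ) * k := by exact_mod_cast hk
    have hZ : ((x : ℤ)) ^ 4 * ((x' : ℤ) ^ 4 + 1) =
        (y : ℤ) * (((y : ℤ) + 1) ^ 3 + ((y : ℤ) + 1) ^ 2 + ((y : ℤ) + 1) + 1 + k) := by
      linear_combination (((x : ℤ) * x') ^ 3 + ((x : ℤ) * x') ^ 2 * ((y : ℤ) + 1) +
        ((x : ℤ) * x') * ((y : ℤ) + 1) ^ 2 + ((y : ℤ) + 1) ^ 3) * hxx'Z + hkZ
    have : ((y : ℤ)) ∣ ((x : ℤ)) ^ 4 * ((x' : ℤ) ^ 4 + 1) := ⟨_, hZ⟩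
    have := Int.natCast_dvd_natCast.mp (by exact_mod_cast this)
    exact this
  have hydvd' : y ∣ x' ^ 4 + 1 := Nat.Coprime.dvd_of_dvd_mul_left hcop hkey
  obtain ⟨y', hy'⟩ := hydvd'
  have hy'Z : (x' : ℤ) ^ 4 + 1 = (y : ℤ) * y' := by exact_mod_cast hy'
  -- positivity
  have hx'pos : 0 < x' := by
    rcases Nat.eq_zero_or_pos x' with h | h
    · rw [h, mul_zero] at hxx'; omega
    · exact h
  have hy'pos : 0 < y' := by
    rcases Nat.eq_zero_or_pos y' with h | h
    · rw [h, mul_zero] at hy'; omega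
    · exact h
  -- x < x'
  have hxx'lt : x < x' := by nlinarith [hxx']
  -- equation
  have heqn : x' * y' * x = x' ^ 4 + y' + 1 := by
    zify
    linear_combination (y' : ℤ) * hxx'Z - hy'Z
  -- invariant
  have hinv' : x' ^ 2 < y' := by
    have h5 : y < x' ^ 2 := by nlinarith [hxx']
    have h6 : y * (x' ^ 2) < y * y' := by
      calc y * x' ^ 2 < x' ^ 2 * x' ^ 2 := by
            exact Nat.mul_lt_mul_of_lt_of_le h5 (le_refl _) (by positivity)
        _ ≤ x' ^ 4 := by ring_nf; exact le_refl _
        _ < x' ^ 4 + 1 := Nat.lt_succ_self _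
        _ = y * y' := hy'
    exact Nat.lt_of_mul_lt_mul_left h6
  exact ⟨x', y', x, hx'pos, hy'pos, hx, heqn, hinv', hxx'lt⟩

lemma unbounded16 (n : ℕ) :
    ∃ x y z : ℕ, 0 < x ∧ 0 < y ∧ 0 < z ∧
      x * y * z = x ^ 4 + y + 1 ∧ x ^ 2 < y ∧ n ≤ x := by
  induction n with
  | zero => exact ⟨3, 41, 1, by norm_num, by norm_num, by norm_num, by norm_num, by norm_num, by norm_num⟩
  | succ n ih =>
    obtain ⟨x, y, z, hx, hy, hz, heq, hinv, hn⟩ := ih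
    obtain ⟨x', y', z', hx', hy', hz', heq', hinv', hlt⟩ := step16 x y z hx hy hz heq hinv
    exact ⟨x', y', z', hx', hy', hz', heq', hinv', by omega⟩

theorem stmt16 :
    {p : ℕ × ℕ × ℕ | 0 < p.1 ∧ 0 < p.2.1 ∧ 0 < p.2.2 ∧
      p.1 * p.2.1 * p.2.2 = p.1 ^ 4 + p.2.1 + 1}.Infinite := by
  set S := {p : ℕ × ℕ × ℕ | 0 < p.1 ∧ 0 < p.2.1 ∧ 0 < p.2.2 ∧
      p.1 * p.2.1 * p.2.2 = p.1 ^ 4 + p.2.1 + 1} with hS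
  have himg : (Prod.fst '' S).Infinite := by
    apply Set.infinite_of_not_bddAbove
    rintro ⟨b, hb⟩
    obtain ⟨x, y, z, hx, hy, hz, heq, hinv, hn⟩ := unbounded16 (b + 1)
    have hmem : x ∈ Prod.fst '' S := ⟨(x, y, z), ⟨hx, hy, hz, heq⟩, rfl⟩
    have := hb hmem
    omega
  exact Set.Infinite.of_image _ himg
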